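/- Let k be a field of characteristic p > 0, e ≥ 1 and m' ≥ 1 with p ∤ m', and set m = p^e·m'. Let u ∈ k[[t]] with u ≡ 1 (mod t). If u^m ≡ 1 (mod t^n) for some n ≥ 1, then u ≡ 1 (mod t^⌈n/p^e⌉). -/

import Mathlib

/-- In characteristic `p > 0`, if `u ∈ k[[t]]`, `u ≡ 1 (mod t)`, `m = p^e·m'` with
`p ∤ m'`, and `u^m ≡ 1 (mod t^n)`, then `u ≡ 1 (mod t^⌈n/p^e⌉)`. -/
theorem power_series_root_of_unity_congruence {k : Type*} [Field k] (p : ℕ) [CharP k p]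
    (hp : 0 < p) (e m' : ℕ) (he : 1 ≤ e) (hm' : 1 ≤ m') (hpm' : ¬ p ∣ m')
    (u : PowerSeries k) (hu : PowerSeries.constantCoeff u = 1)
    (n : ℕ) (hn : 1 ≤ n)
    (hdvd : (PowerSeries.X : PowerSeries k) ^ n ∣ u ^ (p ^ e * m') - 1) :
    (PowerSeries.X : PowerSeries k) ^ ((n + p ^ e - 1) / p ^ e) ∣ u - 1 := by
  haveI : NeZero p := ⟨hp.ne'⟩
  haveI : Fact p.Prime := ⟨CharP.char_is_prime_of_pos k p |>.out⟩
  haveI : CharP (PowerSeries k) p :=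
    charP_of_injective_ringHom (PowerSeries.C_injective : Function.Injective (PowerSeries.C (R := k))) p
  set q := p ^ e with hq
  have hq1 : 1 ≤ q := Nat.one_le_pow _ _ hp
  -- Frobenius
  have hfrob : u ^ (q * m') - 1 = (u ^ m' - 1) ^ q := by
    rw [hq, sub_pow_char_pow, ← pow_mul, one_pow, mul_comm m']
  rw [hfrob] at hdvd
  -- geometric sum factorization
  set S : PowerSeries k := ∑ i ∈ Finset.range m', u ^ i with hS
  have hgeom : u ^ m' - 1 = S * (u - 1) := (geom_sum_mul u m').symm
  have hSunit : IsUnit S := by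
    rw [PowerSeries.isUnit_iff_constantCoeff]
    have : PowerSeries.constantCoeff S = (m' : k) := by
      simp [hS, map_sum, hu]
    rw [this]
    exact isUnit_iff_ne_zero.mpr (fun h => hpm' ((CharP.cast_eq_zero_iff k p m').mp h))
  rw [hgeom, mul_pow] at hdvd
  have hdvd' : (PowerSeries.X : PowerSeries k) ^ n ∣ (u - 1) ^ q :=
    (hSunit.pow q).dvd_mul_left.mp hdvd
  rcases eq_or_ne (u - 1) 0 with h0 | h0
  · rw [h0]; exact dvd_zero _
  -- order arithmetic
  have horder : (n : ℕ∞) ≤ PowerSeries.order ((u - 1) ^ q) := by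
    apply PowerSeries.nat_le_order
    intro i hi
    exact (PowerSeries.X_pow_dvd_iff.mp hdvd') i hi
  have hop : PowerSeries.order ((u - 1) ^ q) = q * PowerSeries.order (u - 1) := by
    induction q with
    | zero => simp [PowerSeries.order_one]
    | succ q ih =>
      rw [pow_succ, PowerSeries.order_mul, ih, Nat.cast_succ, add_mul, one_mul]
  rw [hop] at horder
  obtain ⟨r, hr⟩ : ∃ r : ℕ, PowerSeries.order (u - 1) = r := by
    have := PowerSeries.order_finite_iff_ne_zero.mpr h0
    lift PowerSeries.order (u - 1) to ℕ using this.ne with r hr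
    exact ⟨r, rfl⟩
  rw [hr, ← Nat.cast_mul, Nat.cast_le] at horder
  have hle : (n + q - 1) / q ≤ r := by
    rw [Nat.div_le_iff_le_mul_add_pred (by omega)]
    omega
  calc (PowerSeries.X : PowerSeries k) ^ ((n + q - 1) / q)
      ∣ (PowerSeries.X : PowerSeries k) ^ r := pow_dvd_pow _ hle
    _ ∣ u - 1 := by
        have := PowerSeries.X_pow_order_dvd (φ := u - 1)
        rwa [hr, ENat.toNat_coe] at this
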